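/- Let (Ω, F, P) be a probability space carrying a sequence (B_n)_{n≥1} of i.i.d. random variables with P(B_n = 1) = P(B_n = 0) = 1/2, a constant q ≥ 1, and a sequence (X_n)_{n≥0} of [0,1]-valued random variables such that: X_n is measurable with respect to σ(X_0, B_1, …, B_n); B_{n+1} is independent of σ(X_0, B_1, …, B_n); X_n converges almost surely to a random variable X_∞; and pathwise, whenever X_n ∉ {0,1}, one has X_n ≤ X_{n+1} ≤ q·X_n if B_{n+1} = 1 and X_{n+1} = X_n² if B_{n+1} = 0, while X_{n+1} = X_n whenever X_n ∈ {0,1}. Then P(X_∞ ∈ {0,1}) = 1. -/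

import Mathlib

open MeasureTheory ProbabilityTheory Filter
open scoped ENNReal

theorem polarization_limit_zero_one
    {Ω : Type*} [MeasurableSpace Ω] (P : Measure Ω) [IsProbabilityMeasure P]
    (B : ℕ → Ω → ℕ) (hBmeas : ∀ n, Measurable (B n))
    (hBiid : iIndepFun B P)
    (hB1 : ∀ n, 1 ≤ n → P {ω | B n ω = 1} = 1/2)
    (hB0 : ∀ n, 1 ≤ n → P {ω | B n ω = 0} = 1/2)
    (q : ℝ) (hq : 1 ≤ q)
    (X : ℕ → Ω → ℝ) (hXmeasAmb : ∀ n, Measurable (X n))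
    (hX01 : ∀ n ω, X n ω ∈ Set.Icc (0:ℝ) 1)
    (G : ℕ → MeasurableSpace Ω)
    (hG : ∀ n, G n = (MeasurableSpace.comap (X 0) inferInstance) ⊔
        ⨆ i ∈ Finset.Icc 1 n, MeasurableSpace.comap (B i) inferInstance)
    (hXmeas : ∀ n, Measurable[G n] (X n))
    (hindep : ∀ n, Indep (MeasurableSpace.comap (B (n+1)) inferInstance) (G n) P)
    (Xinf : Ω → ℝ) (hXinfmeas : Measurable Xinf)
    (hconv : ∀ᵐ ω ∂P, Tendsto (fun n => X n ω) atTop (nhds (Xinf ω)))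
    (hdyn : ∀ n ω, (X n ω ≠ 0 ∧ X n ω ≠ 1 →
        (B (n+1) ω = 1 → X n ω ≤ X (n+1) ω ∧ X (n+1) ω ≤ q * X n ω) ∧
        (B (n+1) ω = 0 → X (n+1) ω = X n ω ^ 2)) ∧
      ((X n ω = 0 ∨ X n ω = 1) → X (n+1) ω = X n ω))
    :
    P {ω | Xinf ω = 0 ∨ Xinf ω = 1} = 1 := by
  -- the events {B n = 0}
  set s : ℕ → Set Ω := fun n => B n ⁻¹' {0} with hs
  have hsm : ∀ n, MeasurableSet (s n) := fun n => (hBmeas n) (measurableSet_singleton 0)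
  have hsP : ∀ n, P (s (n + 1)) = 1 / 2 := fun n => hB0 (n + 1) (Nat.le_add_left 1 n)
  -- independence of these events
  have hindepS : iIndepSet s P := by
    rw [iIndepSet_iff_meas_biInter hsm]
    intro t
    exact hBiid.meas_biInter fun i _ => ⟨{0}, measurableSet_singleton 0, rfl⟩
  -- sum of probabilities is infinite
  have hsum : (∑' n, P (s n)) = ∞ := by
    refine top_unique ?_
    calc (⊤ : ℝ≥0∞) = ∑' n : ℕ, P (s (n + 1)) := by
          simp_rw [hsP]
          exact (ENNReal.tsum_const_eq_top_of_ne_zero (by norm_num)).symm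
      _ ≤ ∑' n, P (s n) :=
          ENNReal.tsum_comp_le_tsum_of_injective (fun a b h => by omega) (fun n => P (s n))
  -- second Borel-Cantelli
  have hBC : P (limsup s atTop) = 1 := measure_limsup_eq_one hsm hindepS hsum
  have hBCae : ∀ᵐ ω ∂P, ω ∈ limsup s atTop := by
    rw [ae_iff]
    have hmeas : MeasurableSet (limsup s atTop) :=
      MeasurableSet.measurableSet_limsup fun n => hsm n
    have : P (limsup s atTop)ᶜ = 0 := by
      rw [measure_compl hmeas (measure_ne_top P _), hBC, measure_univ]
      simp
    exact this
  -- pathwise argument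
  have hae : ∀ᵐ ω ∂P, Xinf ω = 0 ∨ Xinf ω = 1 := by
    filter_upwards [hBCae, hconv] with ω hio hc
    rw [Filter.mem_limsup_iff_frequently_mem] at hio
    -- first case: the chain hits {0,1} at some time and is absorbed
    by_cases habs : ∃ n, X n ω = 0 ∨ X n ω = 1
    · obtain ⟨n, hn⟩ := habs
      have hconst : ∀ m, n ≤ m → X m ω = X n ω := by
        intro m
        induction m with
        | zero => intro hm; obtain rfl := Nat.le_zero.mp hm; rfl
        | succ k ih =>
          intro hm
          rcases Nat.lt_or_ge n (k+1) with h | h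
          · have hk : n ≤ k := Nat.lt_succ_iff.mp h
            have h2 : X (k+1) ω = X k ω := (hdyn k ω).2 (by rw [ih hk]; exact hn)
            rw [h2, ih hk]
          · obtain rfl : n = k + 1 := by omega
            rfl
      have hlim : Tendsto (fun _ : ℕ => X n ω) atTop (nhds (Xinf ω)) := by
        refine hc.congr' ?_
        filter_upwards [eventually_ge_atTop n] with m hm
        exact hconst m hm
      have hXeq : X n ω = Xinf ω := tendsto_nhds_unique tendsto_const_nhds hlim
      have hXeq : Xinf ω = X n ω := hXeq.symm
      rcases hn with h | h
      · exact Or.inl (hXeq.trans h)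
      · exact Or.inr (hXeq.trans h)
    · push_neg at habs
      -- frequently X (n+1) ω = X n ω ^ 2
      have hfreq : ∃ᶠ n in atTop, X (n + 1) ω = X n ω ^ 2 := by
        rw [frequently_atTop] at hio ⊢
        intro N
        obtain ⟨m, hm, hm0⟩ := hio (N + 1)
        refine ⟨m - 1, by omega, ?_⟩
        have hm1 : m - 1 + 1 = m := by omega
        exact ((hdyn (m - 1) ω).1 ⟨(habs (m-1)).1, (habs (m-1)).2⟩).2
          (by rw [hm1]; exact hm0)
      have h1 : Tendsto (fun n => X (n + 1) ω) atTop (nhds (Xinf ω)) :=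
        hc.comp (tendsto_add_atTop_nat 1)
      have h2 : Tendsto (fun n => X n ω ^ 2) atTop (nhds (Xinf ω ^ 2)) := hc.pow 2
      have heq : Xinf ω = Xinf ω ^ 2 := tendsto_nhds_unique_of_frequently_eq h1 h2 hfreq
      have : Xinf ω * (Xinf ω - 1) = 0 := by ring_nf; nlinarith [heq]
      rcases mul_eq_zero.mp this with h | h
      · exact Or.inl h
      · exact Or.inr (by linarith)
  -- conclude
  have huniv : {ω | Xinf ω = 0 ∨ Xinf ω = 1} =ᵐ[P] Set.univ :=
    Filter.eventuallyEq_univ.mpr hae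
  rw [measure_congr huniv, measure_univ]
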